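/- Let k be a field of characteristic 2, n ≥ 2, and let A, B ∈ GL(n,k) be symmetric. Let θ denote the map on SL(n,k) given by θ(X) = (Xᵀ)⁻¹. Then there exists C ∈ GL(n,k) with Inn_C ∘ (θ ∘ Inn_A) ∘ Inn_C⁻¹ = θ ∘ Inn_B as maps on SL(n,k) if and only if A is congruent to a scalar multiple of B, i.e., there exist Q ∈ GL(n,k) and a nonzero p ∈ k with Qᵀ·A·Q = p·B. -/

import Mathlib

open Matrix

private lemma rhs_simp' {k : Type*} [Field k] {n : ℕ} (b X : Matrix (Fin n) (Fin n) k)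
    [Invertible b] (hb : bᵀ = b) :
    ((b * X * b⁻¹)ᵀ)⁻¹ = b⁻¹ * ((Xᵀ)⁻¹ * b) := by
  simp [Matrix.transpose_mul, Matrix.transpose_nonsing_inv, Matrix.mul_inv_rev, hb, mul_assoc]

private lemma lhs_simp' {k : Type*} [Field k] {n : ℕ} (a c X : Matrix (Fin n) (Fin n) k)
    [Invertible a] [Invertible c] (ha : aᵀ = a) :
    c * ((a * (c⁻¹ * X * c) * a⁻¹)ᵀ)⁻¹ * c⁻¹
      = c * (a⁻¹ * (cᵀ * ((Xᵀ)⁻¹ * ((cᵀ)⁻¹ * (a * c⁻¹))))) := by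
  simp [Matrix.transpose_mul, Matrix.transpose_nonsing_inv, Matrix.mul_inv_rev, ha, mul_assoc]

private lemma lhs_simp2' {k : Type*} [Field k] {n : ℕ} (a q X : Matrix (Fin n) (Fin n) k)
    [Invertible a] [Invertible q] (ha : aᵀ = a) :
    q⁻¹ * ((a * (q * X * q⁻¹) * a⁻¹)ᵀ)⁻¹ * q
      = q⁻¹ * (a⁻¹ * ((qᵀ)⁻¹ * ((Xᵀ)⁻¹ * (qᵀ * (a * q))))) := by
  simp [Matrix.transpose_mul, Matrix.transpose_nonsing_inv, Matrix.mul_inv_rev, ha, mul_assoc]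

theorem stmt_17 {k : Type*} [Field k] [CharP k 2] {n : ℕ} (hn : 2 ≤ n)
    (A B : (Matrix (Fin n) (Fin n) k)ˣ)
    (hA : (A : Matrix (Fin n) (Fin n) k)ᵀ = (A : Matrix (Fin n) (Fin n) k))
    (hB : (B : Matrix (Fin n) (Fin n) k)ᵀ = (B : Matrix (Fin n) (Fin n) k)) :
    (∃ C : (Matrix (Fin n) (Fin n) k)ˣ, ∀ X : Matrix (Fin n) (Fin n) k, X.det = 1 →
        (C : Matrix (Fin n) (Fin n) k) *
          (((A : Matrix (Fin n) (Fin n) k) *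
            ((↑C⁻¹ : Matrix (Fin n) (Fin n) k) * X * (C : Matrix (Fin n) (Fin n) k)) *
            (↑A⁻¹ : Matrix (Fin n) (Fin n) k))ᵀ)⁻¹ *
          (↑C⁻¹ : Matrix (Fin n) (Fin n) k) =
        (((B : Matrix (Fin n) (Fin n) k) * X * (↑B⁻¹ : Matrix (Fin n) (Fin n) k))ᵀ)⁻¹) ↔
      ∃ Q : (Matrix (Fin n) (Fin n) k)ˣ, ∃ p : k, p ≠ 0 ∧
        (Q : Matrix (Fin n) (Fin n) k)ᵀ * (A : Matrix (Fin n) (Fin n) k) *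
          (Q : Matrix (Fin n) (Fin n) k) = p • (B : Matrix (Fin n) (Fin n) k) := by
  haveI := A.invertible
  haveI := B.invertible
  set a : Matrix (Fin n) (Fin n) k := (A : Matrix (Fin n) (Fin n) k) with ha_def
  set b : Matrix (Fin n) (Fin n) k := (B : Matrix (Fin n) (Fin n) k) with hb_def
  constructor
  · rintro ⟨C, h⟩
    haveI := C.invertible
    set c : Matrix (Fin n) (Fin n) k := (C : Matrix (Fin n) (Fin n) k) with hc_def
    set d : Matrix (Fin n) (Fin n) k := c * (a⁻¹ * cᵀ) with hd_def
    haveI : Invertible (a⁻¹) := Matrix.invOf_eq_nonsing_inv a ▸ invertibleInvOf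
    haveI : Invertible (a⁻¹ * cᵀ) := invertibleMul _ _
    haveI : Invertible d := by rw [hd_def]; exact invertibleMul _ _
    have key : Pairwise fun i j : Fin n =>
        Commute (Matrix.single i j (1 : k)) (b * d) := by
      intro i j hij
      have hXdet : ((transvection i j (1 : k))ᵀ).det = 1 := by
        rw [det_transpose]; exact det_transvection_of_ne i j hij 1
      have hthis := h _ hXdet
      simp only [Matrix.coe_units_inv, ← ha_def, ← hb_def, ← hc_def] at hthis
      rw [lhs_simp' a c _ hA, rhs_simp' b _ hB, transpose_transpose] at hthis
      have hTT : transvection i j (1 : k) * transvection i j 1 = 1 := by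
        rw [transvection_mul_transvection_same i j hij, CharTwo.add_self_eq_zero,
          transvection_zero]
      rw [Matrix.inv_eq_right_inv hTT] at hthis
      set T := transvection i j (1 : k) with hT_def
      have hd' : (cᵀ)⁻¹ * (a * c⁻¹) = d⁻¹ := by
        rw [hd_def]
        simp [Matrix.mul_inv_rev, mul_assoc]
      rw [hd'] at hthis
      have this2 : d * (T * d⁻¹) = b⁻¹ * (T * b) := by
        rw [hd_def]; simp only [mul_assoc]; exact hthis
      have h3 : b * (d * (T * d⁻¹)) * d = b * (b⁻¹ * (T * b)) * d := by rw [this2]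
      have hcomm : (b * d) * T = T * (b * d) := by
        calc (b * d) * T = b * (d * (T * (d⁻¹ * d))) := by
              rw [Matrix.inv_mul_of_invertible, mul_one, mul_assoc]
          _ = b * (d * (T * d⁻¹)) * d := by simp only [mul_assoc]
          _ = b * (b⁻¹ * (T * b)) * d := h3
          _ = T * (b * d) := by
              rw [Matrix.mul_inv_cancel_left_of_invertible, mul_assoc]
      have h4 : (b * d) * (1 + Matrix.single i j (1 : k))
          = (1 + Matrix.single i j (1 : k)) * (b * d) := by
        simpa [hT_def, Matrix.transvection] using hcomm
      simp only [mul_add, add_mul, mul_one, one_mul] at h4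
      exact (add_left_cancel h4).symm
    obtain ⟨r, hr⟩ := mem_range_scalar_of_commute_single key
    have hr' : b * d = r • (1 : Matrix (Fin n) (Fin n) k) := by
      rw [← hr]
      ext i j
      by_cases hij : i = j <;>
        simp [Matrix.scalar_apply, Matrix.one_apply, Matrix.diagonal_apply, hij]
    have hr0 : r ≠ 0 := by
      intro h0
      haveI : Invertible (b * d) := invertibleMul _ _
      have hu := Matrix.isUnit_det_of_invertible (b * d)
      rw [hr', h0, zero_smul, @Matrix.det_zero (Fin n) _ _ k _ ⟨⟨0, by omega⟩⟩] at hu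
      exact not_isUnit_zero hu
    refine ⟨C⁻¹, r⁻¹, inv_ne_zero hr0, ?_⟩
    rw [Matrix.coe_units_inv, ← hc_def, Matrix.transpose_nonsing_inv]
    have h1 : ((cᵀ)⁻¹ * a * c⁻¹) * d = 1 := by
      rw [hd_def]
      simp [mul_assoc]
    have h2 : (r⁻¹ • b) * d = 1 := by
      rw [smul_mul_assoc, hr', smul_smul, inv_mul_cancel₀ hr0, one_smul]
    exact (Matrix.inv_eq_left_inv h1).symm.trans (Matrix.inv_eq_left_inv h2)
  · rintro ⟨Q, p, hp, hQ⟩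
    haveI := Q.invertible
    set q : Matrix (Fin n) (Fin n) k := (Q : Matrix (Fin n) (Fin n) k) with hq_def
    haveI : Invertible (a⁻¹) := Matrix.invOf_eq_nonsing_inv a ▸ invertibleInvOf
    haveI : Invertible p := invertibleOfNonzero hp
    refine ⟨Q⁻¹, fun X hX => ?_⟩
    simp only [Matrix.coe_units_inv, inv_inv, ← ha_def, ← hb_def, ← hq_def]
    rw [lhs_simp2' a q X hA, rhs_simp' b X hB]
    have hqaq : qᵀ * (a * q) = p • b := by rw [← hQ, mul_assoc]
    rw [hqaq]
    have h1 : q⁻¹ * (a⁻¹ * (qᵀ)⁻¹) = p⁻¹ • b⁻¹ := by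
      have e1 : (qᵀ * a * q)⁻¹ = q⁻¹ * (a⁻¹ * (qᵀ)⁻¹) := by
        simp [Matrix.mul_inv_rev, mul_assoc]
      rw [← e1, hQ, Matrix.inv_smul (A := b) p (Matrix.isUnit_det_of_invertible b), invOf_eq_inv]
    calc q⁻¹ * (a⁻¹ * ((qᵀ)⁻¹ * ((Xᵀ)⁻¹ * (p • b))))
        = (q⁻¹ * (a⁻¹ * (qᵀ)⁻¹)) * ((Xᵀ)⁻¹ * (p • b)) := by simp only [mul_assoc]
      _ = (p⁻¹ • b⁻¹) * ((Xᵀ)⁻¹ * (p • b)) := by rw [h1]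
      _ = b⁻¹ * ((Xᵀ)⁻¹ * b) := by
          simp [smul_mul_assoc, mul_smul_comm, smul_smul, inv_mul_cancel₀ hp]
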